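/- arXiv:1304.4013 — 3 statements merged into one kernel-verified Lean document; each statement's English description precedes it below -/
import Mathlib

section
/- Let V be a finite-dimensional real vector space, S ⊆ V a set of nonzero vectors ('curve classes'), and λ, ω : V → ℝ linear functionals with ω(c) ≥ 1 for every c ∈ S. Fix d ∈ ℝ and suppose: for every c ∈ S with λ(c) < -d there exist nonzero elements c₁, c₂ of the additive submonoid generated by S with c = c₁ + c₂ and ω(c₁) ≥ 1, ω(c₂) ≥ 1. Then every element of the additive submonoid generated by S lies in the convex cone { z ∈ V | λ(z) ≥ 0 } + cone generated by { c ∈ S | 0 < -λ(c) ≤ d }. -/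
/-- Abstract Step 1 of the cone theorem `theoremNE`: every element of the monoid
generated by the curve classes `S` lies in `{λ ≥ 0}` plus the cone generated by
the classes of `S` with `0 < -λ(c) ≤ d`, given the splitting hypothesis. -/
theorem stmt_8 {V : Type*} [AddCommGroup V] [Module ℝ V] [FiniteDimensional ℝ V]
    (S : Set V) (hS0 : ∀ c ∈ S, c ≠ 0)
    (lam ω : V →ₗ[ℝ] ℝ) (hω : ∀ c ∈ S, 1 ≤ ω c) (d : ℝ)
    (hsplit : ∀ c ∈ S, lam c < -d →
      ∃ c₁ ∈ AddSubmonoid.closure S, ∃ c₂ ∈ AddSubmonoid.closure S,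
        c₁ ≠ 0 ∧ c₂ ≠ 0 ∧ c = c₁ + c₂ ∧ 1 ≤ ω c₁ ∧ 1 ≤ ω c₂) :
    ∀ z ∈ AddSubmonoid.closure S,
      ∃ z₁ z₂ : V, 0 ≤ lam z₁ ∧
        z₂ ∈ AddSubmonoid.closure
          { t : V | ∃ r : ℝ, 0 ≤ r ∧ ∃ c ∈ S, 0 < -lam c ∧ -lam c ≤ d ∧ t = r • c } ∧
        z = z₁ + z₂ := by
  set T : Set V :=
    { t : V | ∃ r : ℝ, 0 ≤ r ∧ ∃ c ∈ S, 0 < -lam c ∧ -lam c ≤ d ∧ t = r • c } with hT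
  have hωnn : ∀ z ∈ AddSubmonoid.closure S, 0 ≤ ω z := by
    intro z hz
    induction hz using AddSubmonoid.closure_induction with
    | mem c hc => linarith [hω c hc]
    | zero => simp
    | add x y hx hy ihx ihy => rw [map_add]; linarith
  have hdec : ∀ z ∈ AddSubmonoid.closure S,
      z = 0 ∨ ∃ c ∈ S, ∃ z' ∈ AddSubmonoid.closure S, z = c + z' := by
    intro z hz
    induction hz using AddSubmonoid.closure_induction with
    | mem c hc => exact Or.inr ⟨c, hc, 0, zero_mem _, (add_zero c).symm⟩
    | zero => exact Or.inl rfl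
    | add x y hx hy ihx ihy =>
      rcases ihx with rfl | ⟨c, hc, x', hx', rfl⟩
      · rw [zero_add]; exact ihy
      · exact Or.inr ⟨c, hc, x' + y, add_mem hx' hy, by abel⟩
  have key : ∀ n : ℕ, ∀ z ∈ AddSubmonoid.closure S, ω z < n →
      ∃ z₁ z₂ : V, 0 ≤ lam z₁ ∧ z₂ ∈ AddSubmonoid.closure T ∧ z = z₁ + z₂ := by
    intro n
    induction n with
    | zero => intro z hz h; exact absurd h (not_lt.2 (by exact_mod_cast hωnn z hz))
    | succ n ih =>
      intro z hz hωz
      rcases hdec z hz with rfl | ⟨c, hc, z', hz', rfl⟩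
      · exact ⟨0, 0, by simp, zero_mem _, by simp⟩
      have hωc := hω c hc
      have hωz' := hωnn z' hz'
      have hadd : ω (c + z') = ω c + ω z' := map_add ω c z'
      have hzn : ω c + ω z' < n + 1 := by
        rw [← hadd]; exact_mod_cast hωz
      have hz'lt : ω z' < n := by push_cast; linarith
      obtain ⟨z₁, z₂, h1, h2, hsum⟩ := ih z' hz' hz'lt
      by_cases hlc : 0 ≤ lam c
      · exact ⟨c + z₁, z₂, by rw [map_add]; linarith, h2, by rw [hsum]; abel⟩
      push_neg at hlc
      by_cases hld : lam c < -d
      · obtain ⟨c₁, hc₁, c₂, hc₂, _, _, hcsum, hω1, hω2⟩ := hsplit c hc hld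
        have haddc : ω c = ω c₁ + ω c₂ := by rw [hcsum, map_add]
        have hc1lt : ω c₁ < n := by push_cast; linarith
        have hc2lt : ω c₂ < n := by push_cast; linarith
        obtain ⟨a₁, b₁, ha1, hb1, hs1⟩ := ih c₁ hc₁ hc1lt
        obtain ⟨a₂, b₂, ha2, hb2, hs2⟩ := ih c₂ hc₂ hc2lt
        refine ⟨a₁ + a₂ + z₁, b₁ + b₂ + z₂, ?_, add_mem (add_mem hb1 hb2) h2, ?_⟩
        · simp only [map_add]; linarith
        · rw [hcsum, hs1, hs2, hsum]; abel
      · push_neg at hld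
        have hcT : c ∈ T := ⟨1, zero_le_one, c, hc, by linarith, by linarith,
          (one_smul ℝ c).symm⟩
        exact ⟨z₁, c + z₂, h1, add_mem (AddSubmonoid.subset_closure hcT) h2,
          by rw [hsum]; abel⟩
  intro z hz
  obtain ⟨n, hn⟩ := exists_nat_gt (ω z)
  exact key n z hz hn
end

section
/- Let V be a finite-dimensional real vector space and N ⊆ V a closed convex cone containing no lines. Let λ : V → ℝ and ω : V → ℝ be linear functionals such that ω is strictly positive on N \ {0}. Let (γ_i)_{i ∈ I} be a countable family of elements of N and d > 0 a real number such that 0 < -λ(γ_i) ≤ d for all i, and assume: (1) N is the closure of the cone C := { z ∈ N | λ(z) ≥ 0 } + ∑_{i∈I} ℝ₊ γ_i, and (2) for every ε > 0 the set { i ∈ I | λ(γ_i) + ε·ω(γ_i) < 0 } is finite. Then N = C, i.e. the cone C is already closed. -/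
open Filter Topology Bornology Set

set_option linter.unusedSectionVars false
set_option linter.unnecessarySimpa false
set_option maxHeartbeats 1000000

section aux

variable {V : Type*} [NormedAddCommGroup V] [NormedSpace ℝ V] [FiniteDimensional ℝ V]

def ExtremalIn (N : ConvexCone ℝ V) (v : V) : Prop :=
  v ∈ N ∧ ∀ a b : V, a ∈ N → b ∈ N → a + b = v → ∃ t : ℝ, a = t • v

variable {V : Type*} [NormedAddCommGroup V] [NormedSpace ℝ V] [FiniteDimensional ℝ V]

/-- An extremal vector in a convex cone. -/


theorem zero_mem_of_closed {N : ConvexCone ℝ V} (hN : IsClosed (N : Set V))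
    {z : V} (hz : z ∈ N) : (0 : V) ∈ N := by
  have h1 : Tendsto (fun n : ℕ => ((n : ℝ) + 1)⁻¹ • z) atTop (𝓝 ((0:ℝ) • z)) := by
    apply Tendsto.smul_const
    have := tendsto_one_div_add_atTop_nhds_zero_nat (𝕜 := ℝ)
    simpa [one_div] using this
  rw [zero_smul] at h1
  refine hN.mem_of_tendsto h1 (Eventually.of_forall fun n => ?_)
  exact N.smul_mem (by positivity) hz

theorem smul_mem_of_nonneg {N : ConvexCone ℝ V} (h0 : (0 : V) ∈ N)
    {x : V} (hx : x ∈ N) {r : ℝ} (hr : 0 ≤ r) : r • x ∈ N := by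
  rcases hr.eq_or_lt with h | h
  · simpa [← h] using h0
  · exact N.smul_mem h hx

theorem sum_mem_cone {N : ConvexCone ℝ V} (h0 : (0 : V) ∈ N) {α : Type*} (s : Finset α)
    (f : α → V) (hf : ∀ i ∈ s, f i ∈ N) : ∑ i ∈ s, f i ∈ N :=
  Finset.sum_induction f (· ∈ N) (fun _ _ ha hb => N.add_mem ha hb) h0 hf

theorem omega_nonneg {N : ConvexCone ℝ V} (ω : V →ₗ[ℝ] ℝ)
    (hω : ∀ z ∈ N, z ≠ 0 → 0 < ω z) {v : V} (hv : v ∈ N) : 0 ≤ ω v := by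
  rcases eq_or_ne v 0 with rfl | h
  · simp
  · exact (hω v hv h).le

/-- On a closed cone with a strictly positive functional, the functional dominates the norm. -/
theorem cone_norm_bound (N : ConvexCone ℝ V) (hN : IsClosed (N : Set V))
    (ω : V →ₗ[ℝ] ℝ) (hω : ∀ z ∈ N, z ≠ 0 → 0 < ω z) :
    ∃ c : ℝ, 0 < c ∧ ∀ v ∈ N, c * ‖v‖ ≤ ω v := by
  have hωc : Continuous ω := ω.continuous_of_finiteDimensional
  set S : Set V := (N : Set V) ∩ Metric.sphere 0 1 with hS
  have hScpt : IsCompact S := (isCompact_sphere 0 1).inter_left hN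
  rcases S.eq_empty_or_nonempty with hSe | hSne
  · refine ⟨1, one_pos, fun v hv => ?_⟩
    rcases eq_or_ne v 0 with rfl | hv0
    · simp
    · exfalso
      have h1 : ‖v‖⁻¹ • v ∈ S := by
        constructor
        · exact N.smul_mem (inv_pos.2 (norm_pos_iff.2 hv0)) hv
        · simp [norm_smul, abs_of_nonneg, inv_mul_cancel₀ (norm_ne_zero_iff.2 hv0)]
      rw [hSe] at h1; exact h1
  · obtain ⟨v₀, hv₀S, hmin⟩ := hScpt.exists_isMinOn hSne hωc.continuousOn
    have hv₀0 : v₀ ≠ 0 := by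
      intro h; rw [h] at hv₀S; simpa using hv₀S.2
    have hc : 0 < ω v₀ := hω v₀ hv₀S.1 hv₀0
    refine ⟨ω v₀, hc, fun v hv => ?_⟩
    rcases eq_or_ne v 0 with rfl | hv0
    · simp
    · set u : V := ‖v‖⁻¹ • v with hu
      have huS : u ∈ S := by
        constructor
        · exact N.smul_mem (inv_pos.2 (norm_pos_iff.2 hv0)) hv
        · simp [hu, norm_smul, abs_of_nonneg, inv_mul_cancel₀ (norm_ne_zero_iff.2 hv0)]
      have h2 : ω v₀ ≤ ω u := hmin huS
      have h3 : ω v = ‖v‖ * ω u := by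
        rw [hu, map_smul, smul_eq_mul, ← mul_assoc,
          mul_inv_cancel₀ (norm_ne_zero_iff.2 hv0), one_mul]
      rw [h3, mul_comm (ω v₀)]
      exact mul_le_mul_of_nonneg_left h2 (norm_nonneg v)



/-- Supporting functional at a point of a closed convex cone from which one can exit
in direction `-e`. -/
theorem cone_support (N : ConvexCone ℝ V) (hN : IsClosed (N : Set V)) (h0 : (0 : V) ∈ N)
    (e z : V) (hz : z ∈ N) (hout : ∀ δ : ℝ, 0 < δ → z - δ • e ∉ N) :
    ∃ g : V →L[ℝ] ℝ, g ≠ 0 ∧ (∀ y ∈ N, g y ≤ 0) ∧ g z = 0 := by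
  have hconv : Convex ℝ (N : Set V) := N.convex
  -- separating functionals
  have hsep : ∀ n : ℕ, ∃ f : V →L[ℝ] ℝ, (∀ y ∈ N, f y ≤ 0) ∧ ‖f‖ = 1 ∧
      0 < f (z - ((n : ℝ) + 1)⁻¹ • e) := by
    intro n
    have hpos : (0:ℝ) < ((n : ℝ) + 1)⁻¹ := by positivity
    obtain ⟨f, u, hfu, huf⟩ :=
      geometric_hahn_banach_closed_point hconv hN (hout _ hpos)
    have hu0 : 0 < u := by simpa using hfu 0 h0
    have hfle : ∀ y ∈ N, f y ≤ 0 := by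
      intro y hy
      by_contra hpos'
      push_neg at hpos'
      have ht : 0 < (u + 1) / f y := by positivity
      have := hfu _ (N.smul_mem ht hy)
      rw [map_smul, smul_eq_mul, div_mul_cancel₀ _ (ne_of_gt hpos')] at this
      linarith
    have hf0 : f ≠ 0 := by
      intro h; rw [h] at huf; simp at huf; linarith
    have hnf : 0 < ‖f‖ := norm_pos_iff.2 hf0
    refine ⟨‖f‖⁻¹ • f, fun y hy => ?_, ?_, ?_⟩
    · show ‖f‖⁻¹ * f y ≤ 0
      exact mul_nonpos_of_nonneg_of_nonpos (by positivity) (hfle y hy)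
    · rw [norm_smul (α := ℝ) (β := V →L[ℝ] ℝ), norm_inv, norm_norm, inv_mul_cancel₀ (ne_of_gt hnf)]
    · show 0 < ‖f‖⁻¹ * f (z - ((n : ℝ) + 1)⁻¹ • e)
      have : 0 < f (z - ((n : ℝ) + 1)⁻¹ • e) := lt_trans hu0 huf
      positivity
  choose f hfle hfnorm hfpos using hsep
  -- Bolzano–Weierstrass in the dual
  have hball : ∀ n, f n ∈ Metric.closedBall (0 : V →L[ℝ] ℝ) 1 := by
    intro n; rw [Metric.mem_closedBall, dist_zero_right, hfnorm]
  obtain ⟨g, -, φ, hφ, hconv'⟩ :=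
    tendsto_subseq_of_bounded Metric.isBounded_closedBall hball
  have heval : ∀ y : V, Tendsto (fun k => f (φ k) y) atTop (𝓝 (g y)) := by
    intro y
    have hc : Continuous fun h : V →L[ℝ] ℝ => h y :=
      (ContinuousLinearMap.apply ℝ ℝ y).continuous
    exact (hc.tendsto g).comp hconv'
  have hgnorm : ‖g‖ = 1 := by
    have h1 : Tendsto (fun k => ‖f (φ k)‖) atTop (𝓝 ‖g‖) := hconv'.norm
    have h2 : Tendsto (fun k => ‖f (φ k)‖) atTop (𝓝 1) := by
      simpa [hfnorm] using tendsto_const_nhds (x := (1:ℝ)) (f := atTop (α := ℕ))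
    exact tendsto_nhds_unique h1 h2
  refine ⟨g, by simp [← norm_pos_iff, hgnorm], fun y hy => ?_, ?_⟩
  · exact le_of_tendsto (heval y) (Eventually.of_forall fun k => hfle _ y hy)
  · have hgz_le : g z ≤ 0 := le_of_tendsto (heval z) (Eventually.of_forall fun k => hfle _ z hz)
    have hgz_ge : 0 ≤ g z := by
      have hlow : ∀ k : ℕ, -(((k : ℝ) + 1)⁻¹ * ‖e‖) ≤ f (φ k) z := by
        intro k
        have h1 : 0 < f (φ k) (z - ((φ k : ℝ) + 1)⁻¹ • e) := hfpos (φ k)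
        rw [map_sub, map_smul, smul_eq_mul] at h1
        have h2 : |f (φ k) e| ≤ ‖e‖ := by
          calc |f (φ k) e| ≤ ‖f (φ k)‖ * ‖e‖ := (f (φ k)).le_opNorm e
          _ = ‖e‖ := by rw [hfnorm]; ring
        have h3 : ((φ k : ℝ) + 1)⁻¹ ≤ ((k : ℝ) + 1)⁻¹ := by
          apply inv_anti₀ (by positivity)
          have h : k ≤ φ k := hφ.le_apply
          have := (Nat.cast_le (α := ℝ)).2 h
          linarith
        have h5 : -‖e‖ ≤ f (φ k) e := (abs_le.mp h2).1
        have hp1 : (0:ℝ) ≤ ((φ k : ℝ) + 1)⁻¹ := by positivity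
        have h7 := mul_le_mul_of_nonneg_left h5 hp1
        have h8 := mul_le_mul_of_nonneg_right h3 (norm_nonneg e)
        linarith
      have hlim : Tendsto (fun k => f (φ k) z + ((k : ℝ) + 1)⁻¹ * ‖e‖) atTop (𝓝 (g z + 0)) := by
        apply (heval z).add
        have h5 : Tendsto (fun k : ℕ => ((k : ℝ) + 1)⁻¹) atTop (𝓝 0) := by
          simpa [one_div] using tendsto_one_div_add_atTop_nhds_zero_nat (𝕜 := ℝ)
        simpa using h5.mul_const ‖e‖
      have h9 : (0:ℝ) ≤ g z + 0 :=
        ge_of_tendsto hlim (Eventually.of_forall fun k => by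
          have := hlow k; linarith)
      linarith
    linarith




theorem extremalIn_zero {N : ConvexCone ℝ V} (h0 : (0:V) ∈ N)
    (hlines : ∀ v ∈ N, -v ∈ N → v = 0) : ExtremalIn N 0 := by
  refine ⟨h0, fun a b ha hb hab => ⟨0, ?_⟩⟩
  have hna : -a = b := neg_eq_of_add_eq_zero_right hab
  have : a = 0 := hlines a ha (by rw [hna]; exact hb)
  simp [this]

theorem extremalIn_smul {N : ConvexCone ℝ V} (h0 : (0:V) ∈ N)
    (hlines : ∀ v ∈ N, -v ∈ N → v = 0) {e : V} (he : ExtremalIn N e)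
    {t : ℝ} (ht : 0 ≤ t) : ExtremalIn N (t • e) := by
  rcases ht.eq_or_lt with h | h
  · rw [← h, zero_smul]; exact extremalIn_zero h0 hlines
  · refine ⟨N.smul_mem h he.1, fun a b ha hb hab => ?_⟩
    have h1 : t⁻¹ • a + t⁻¹ • b = e := by
      rw [← smul_add, hab, inv_smul_smul₀ (ne_of_gt h)]
    obtain ⟨s, hs⟩ := he.2 _ _ (N.smul_mem (inv_pos.2 h) ha) (N.smul_mem (inv_pos.2 h) hb) h1
    refine ⟨s, ?_⟩
    have h2 : a = t • (t⁻¹ • a) := (smul_inv_smul₀ (ne_of_gt h) a).symm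
    rw [h2, hs, smul_comm]

theorem extremePoint_extremalIn {N : ConvexCone ℝ V} (ω : V →ₗ[ℝ] ℝ)
    (hω : ∀ z ∈ N, z ≠ 0 → 0 < ω z) {e : V}
    (he : e ∈ Set.extremePoints ℝ {v : V | v ∈ N ∧ ω v = 1}) : ExtremalIn N e := by
  obtain ⟨⟨heN, heω⟩, hext⟩ := he
  refine ⟨heN, fun a b ha hb hab => ?_⟩
  rcases eq_or_ne a 0 with rfl | ha0
  · exact ⟨0, (zero_smul ℝ e).symm⟩
  rcases eq_or_ne b 0 with rfl | hb0
  · exact ⟨1, by rw [one_smul, ← hab, add_zero]⟩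
  have hwa : 0 < ω a := hω a ha ha0
  have hwb : 0 < ω b := hω b hb hb0
  have hsum : ω a + ω b = 1 := by rw [← map_add, hab, heω]
  have ha'mem : (ω a)⁻¹ • a ∈ {v : V | v ∈ N ∧ ω v = 1} :=
    ⟨N.smul_mem (inv_pos.2 hwa) ha, by
      rw [map_smul, smul_eq_mul, inv_mul_cancel₀ (ne_of_gt hwa)]⟩
  have hb'mem : (ω b)⁻¹ • b ∈ {v : V | v ∈ N ∧ ω v = 1} :=
    ⟨N.smul_mem (inv_pos.2 hwb) hb, by
      rw [map_smul, smul_eq_mul, inv_mul_cancel₀ (ne_of_gt hwb)]⟩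
  have hseg : e ∈ openSegment ℝ ((ω a)⁻¹ • a) ((ω b)⁻¹ • b) := by
    refine ⟨ω a, ω b, hwa, hwb, hsum, ?_⟩
    rw [smul_inv_smul₀ (ne_of_gt hwa), smul_inv_smul₀ (ne_of_gt hwb), hab]
  have haa := hext ha'mem hb'mem hseg
  exact ⟨ω a, by rw [← haa, smul_inv_smul₀ (ne_of_gt hwa)]⟩

universe u

/-- Every element of a closed pointed cone with a strictly positive functional is a finite sum
of extremal vectors. -/
theorem cone_extremal_decomp (n : ℕ) :
    ∀ (E : Type u) [NormedAddCommGroup E] [NormedSpace ℝ E] [FiniteDimensional ℝ E],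
      Module.finrank ℝ E ≤ n →
      ∀ (N : ConvexCone ℝ E), IsClosed (N : Set E) → (∀ v ∈ N, -v ∈ N → v = 0) →
      ∀ (ω : E →ₗ[ℝ] ℝ), (∀ z ∈ N, z ≠ 0 → 0 < ω z) →
      ∀ z ∈ N, ∃ S : Multiset E, (∀ v ∈ S, ExtremalIn N v) ∧ z = S.sum := by
  induction n using Nat.strong_induction_on with
  | _ n IH =>
  intro E _ _ _ hrank N hNcl hNlines ω hω z hz
  rcases eq_or_ne z 0 with rfl | hz0
  · exact ⟨0, by simp, by simp⟩
  have h0 : (0 : E) ∈ N := zero_mem_of_closed hNcl hz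
  have hωcont : Continuous ω := ω.continuous_of_finiteDimensional
  set B : Set E := {v : E | v ∈ N ∧ ω v = 1} with hBdef
  have hwz : 0 < ω z := hω z hz hz0
  have hBne : B.Nonempty := by
    refine ⟨(ω z)⁻¹ • z, N.smul_mem (inv_pos.2 hwz) hz, ?_⟩
    rw [map_smul, smul_eq_mul, inv_mul_cancel₀ (ne_of_gt hwz)]
  have hBcl : IsClosed B := by
    have hBeq : B = (N : Set E) ∩ ω ⁻¹' {1} := by
      ext v; simp [hBdef, Set.mem_inter_iff]
    rw [hBeq]
    exact hNcl.inter (isClosed_singleton.preimage hωcont)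
  have hBbd : IsBounded B := by
    obtain ⟨c, hc, hcb⟩ := cone_norm_bound N hNcl ω hω
    apply (Metric.isBounded_closedBall (x := (0:E)) (r := c⁻¹)).subset
    intro v hv
    rw [Metric.mem_closedBall, dist_zero_right]
    have h1 : c * ‖v‖ ≤ 1 := by rw [← hv.2]; exact hcb v hv.1
    calc ‖v‖ = c⁻¹ * (c * ‖v‖) := by field_simp
    _ ≤ c⁻¹ * 1 := mul_le_mul_of_nonneg_left h1 (by positivity)
    _ = c⁻¹ := mul_one _
  obtain ⟨e, he⟩ := (Metric.isCompact_of_isClosed_isBounded hBcl hBbd).extremePoints_nonempty hBne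
  have heN : e ∈ N := he.1.1
  have heω : ω e = 1 := he.1.2
  have hext_e : ExtremalIn N e := extremePoint_extremalIn ω hω he
  -- maximal multiple of `e` that can be subtracted from `z`
  set T : Set ℝ := {t : ℝ | 0 ≤ t ∧ z - t • e ∈ N} with hTdef
  have hTne : (0:ℝ) ∈ T := ⟨le_refl 0, by simpa using hz⟩
  have hTbdd : BddAbove T := by
    refine ⟨ω z, fun t ht => ?_⟩
    have h1 : 0 ≤ ω (z - t • e) := omega_nonneg ω hω ht.2
    rw [map_sub, map_smul, smul_eq_mul, heω, mul_one] at h1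
    linarith
  have hTcl : IsClosed T := by
    have hTeq : T = Ici (0:ℝ) ∩ (fun t : ℝ => z - t • e) ⁻¹' N := by
      ext t; simp [hTdef, Set.mem_inter_iff]
    rw [hTeq]
    exact isClosed_Ici.inter (hNcl.preimage (continuous_const.sub (continuous_id.smul continuous_const)))
  set t0 := sSup T with ht0def
  have ht0T : t0 ∈ T := hTcl.csSup_mem ⟨0, hTne⟩ hTbdd
  have ht0 : 0 ≤ t0 := ht0T.1
  set z' := z - t0 • e with hz'def
  have hz'N : z' ∈ N := ht0T.2
  have hout : ∀ δ : ℝ, 0 < δ → z' - δ • e ∉ N := by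
    intro δ hδ hmem
    have hmem' : t0 + δ ∈ T := by
      refine ⟨by linarith, ?_⟩
      rw [add_smul, ← sub_sub]
      exact hmem
    have := le_csSup hTbdd hmem'
    linarith
  rcases eq_or_ne z' 0 with hz'0 | hz'0
  · have hzte : z = t0 • e := by
      have := sub_eq_zero.mp hz'0
      exact this
    refine ⟨{t0 • e}, ?_, by rw [Multiset.sum_singleton, hzte]⟩
    intro v hv
    rw [Multiset.mem_singleton] at hv
    rw [hv]
    exact extremalIn_smul h0 hNlines hext_e ht0
  · obtain ⟨g, hg0, hgle, hgz⟩ := cone_support N hNcl h0 e z' hz'N hout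
    set H : Submodule ℝ E := LinearMap.ker (g : E →ₗ[ℝ] ℝ) with hHdef
    have hHne : H ≠ ⊤ := by
      intro h
      obtain ⟨x, hx⟩ := DFunLike.ne_iff.mp hg0
      have hxH : x ∈ H := h.symm ▸ Submodule.mem_top
      exact hx (LinearMap.mem_ker.mp hxH)
    have hrankH : Module.finrank ℝ H < n :=
      lt_of_lt_of_le (Submodule.finrank_lt hHne) hrank
    set F : ConvexCone ℝ ↥H := N.comap H.subtype with hFdef
    have hmemF : ∀ w : ↥H, w ∈ F ↔ (w : E) ∈ N := fun w => Iff.rfl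
    have hFcl : IsClosed (F : Set ↥H) := by
      have : (F : Set ↥H) = Subtype.val ⁻¹' (N : Set E) := rfl
      rw [this]
      exact hNcl.preimage continuous_subtype_val
    have hFlines : ∀ v ∈ F, -v ∈ F → v = 0 := by
      intro v hv hnv
      have h1 : (v : E) ∈ N := (hmemF v).mp hv
      have h2 : -(v : E) ∈ N := by
        have := (hmemF (-v)).mp hnv
        simpa using this
      exact Subtype.ext (hNlines _ h1 h2)
    have hω' : ∀ w ∈ F, w ≠ 0 → 0 < (ω.comp H.subtype) w := by
      intro w hw hw0
      exact hω _ ((hmemF w).mp hw) (fun h => hw0 (Subtype.ext h))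
    have hz'H : z' ∈ H := LinearMap.mem_ker.mpr hgz
    have hz'F : (⟨z', hz'H⟩ : ↥H) ∈ F := (hmemF _).mpr hz'N
    obtain ⟨S', hS'ext, hS'sum⟩ :=
      IH _ hrankH ↥H le_rfl F hFcl hFlines (ω.comp H.subtype) hω' _ hz'F
    refine ⟨t0 • e ::ₘ S'.map Subtype.val, ?_, ?_⟩
    · intro v hv
      rcases Multiset.mem_cons.mp hv with rfl | hv'
      · exact extremalIn_smul h0 hNlines hext_e ht0
      · obtain ⟨w, hwS', rfl⟩ := Multiset.mem_map.mp hv'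
        refine ⟨(hmemF w).mp (hS'ext w hwS').1, ?_⟩
        intro a b ha hb hab
        have hgw : g (w : E) = 0 := LinearMap.mem_ker.mp w.2
        have hgab : g a + g b = 0 := by
          rw [← map_add, hab, hgw]
        have hga : g a = 0 := le_antisymm (hgle a ha) (by linarith [hgle b hb])
        have hgb : g b = 0 := by linarith
        have habH : (⟨a, LinearMap.mem_ker.mpr hga⟩ : ↥H) + ⟨b, LinearMap.mem_ker.mpr hgb⟩ = w :=
          Subtype.ext hab
        obtain ⟨t, htw⟩ := (hS'ext w hwS').2 _ _ ((hmemF _).mpr ha) ((hmemF _).mpr hb) habH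
        refine ⟨t, ?_⟩
        have := congrArg Subtype.val htw
        simpa using this
    · rw [Multiset.sum_cons]
      have h1 : z' = (S'.map Subtype.val).sum := by
        have h3 := map_multiset_sum H.subtype S'
        rw [← hS'sum] at h3
        simpa using h3
      rw [← h1, hz'def]
      abel




theorem monoid_rep {I : Type*} (γ : I → V) {y : V}
    (hy : y ∈ AddSubmonoid.closure (⋃ i : I, { t : V | ∃ r : ℝ, 0 ≤ r ∧ t = r • γ i })) :
    ∃ (T : Finset I) (r : I → ℝ), (∀ i, 0 ≤ r i) ∧ (∀ i ∉ T, r i = 0) ∧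
      y = ∑ i ∈ T, r i • γ i := by
  classical
  induction hy using AddSubmonoid.closure_induction with
  | mem x hx =>
      rw [Set.mem_iUnion] at hx
      obtain ⟨i, r, hr, rfl⟩ := hx
      refine ⟨{i}, fun j => if j = i then r else 0, ?_, ?_, ?_⟩
      · intro j; dsimp only; split <;> simp [hr]
      · intro j hj; rw [Finset.mem_singleton] at hj; simp [hj]
      · simp
  | zero => exact ⟨∅, fun _ => 0, fun _ => le_refl 0, fun _ _ => rfl, by simp⟩
  | add x y' hx hy' ihx ihy =>
      obtain ⟨T₁, r₁, hr₁, hv₁, hs₁⟩ := ihx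
      obtain ⟨T₂, r₂, hr₂, hv₂, hs₂⟩ := ihy
      refine ⟨T₁ ∪ T₂, r₁ + r₂, fun i => add_nonneg (hr₁ i) (hr₂ i), ?_, ?_⟩
      · intro i hi
        rw [Finset.mem_union] at hi; push_neg at hi
        simp [Pi.add_apply, hv₁ i hi.1, hv₂ i hi.2]
      · have e₁ : ∑ i ∈ T₁, r₁ i • γ i = ∑ i ∈ T₁ ∪ T₂, r₁ i • γ i :=
          Finset.sum_subset Finset.subset_union_left
            (fun i _ hi => by rw [hv₁ i hi, zero_smul])
        have e₂ : ∑ i ∈ T₂, r₂ i • γ i = ∑ i ∈ T₁ ∪ T₂, r₂ i • γ i :=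
          Finset.sum_subset Finset.subset_union_right
            (fun i _ hi => by rw [hv₂ i hi, zero_smul])
        calc x + y' = ∑ i ∈ T₁ ∪ T₂, r₁ i • γ i + ∑ i ∈ T₁ ∪ T₂, r₂ i • γ i := by
              rw [hs₁, hs₂, e₁, e₂]
        _ = ∑ i ∈ T₁ ∪ T₂, (r₁ i • γ i + r₂ i • γ i) := Finset.sum_add_distrib.symm
        _ = ∑ i ∈ T₁ ∪ T₂, (r₁ + r₂) i • γ i :=
              Finset.sum_congr rfl fun i _ => by rw [Pi.add_apply, add_smul]

/-- Every extremal vector of `N` on which `lam` is negative is a nonnegative multiple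
of one of the `γ i`. -/
theorem extremal_neg_gamma
    (N : ConvexCone ℝ V) (hN_closed : IsClosed (N : Set V))
    (lam ω : V →ₗ[ℝ] ℝ)
    (hω : ∀ z ∈ N, z ≠ 0 → 0 < ω z)
    {I : Type*} (γ : I → V) (hγN : ∀ i, γ i ∈ N)
    (hγ : ∀ i, 0 < -lam (γ i))
    (C : Set V)
    (hC : C = { z : V | ∃ x ∈ (N : Set V), 0 ≤ lam x ∧
        ∃ y ∈ AddSubmonoid.closure (⋃ i : I, { t : V | ∃ r : ℝ, 0 ≤ r ∧ t = r • γ i }),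
          z = x + y })
    (h1 : (N : Set V) = closure C)
    (h2 : ∀ ε : ℝ, 0 < ε → { i : I | lam (γ i) + ε * ω (γ i) < 0 }.Finite)
    (h0 : (0:V) ∈ N)
    {v : V} (hv : ExtremalIn N v) (hvneg : lam v < 0) :
    ∃ (i : I) (r : ℝ), 0 ≤ r ∧ v = r • γ i := by
  classical
  have hωcont : Continuous ω := ω.continuous_of_finiteDimensional
  have hlamcont : Continuous lam := lam.continuous_of_finiteDimensional
  have hvN : v ∈ N := hv.1
  have hv0 : v ≠ 0 := fun h => by rw [h] at hvneg; simp at hvneg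
  have hw : 0 < ω v := hω v hvN hv0
  have hγ0 : ∀ i, γ i ≠ 0 := by
    intro i h
    have := hγ i
    rw [h] at this; simp at this
  have hωγ : ∀ i, 0 < ω (γ i) := fun i => hω _ (hγN i) (hγ0 i)
  set ε : ℝ := -lam v / (3 * ω v) with hεdef
  have hε : 0 < ε := div_pos (by linarith) (by linarith)
  have hεω : ε * ω v = -lam v / 3 := by
    rw [hεdef, div_mul_eq_mul_div, mul_comm (3:ℝ) (ω v), ← div_div,
      mul_div_assoc, div_self (ne_of_gt hw), mul_one]
  obtain hGfin := h2 ε hε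
  set Gfin : Finset I := hGfin.toFinset with hGdef
  have hGmem : ∀ i : I, i ∈ Gfin ↔ lam (γ i) + ε * ω (γ i) < 0 := by
    intro i; rw [hGdef, Set.Finite.mem_toFinset]; exact Iff.rfl
  have hvcl : v ∈ closure C := by rw [← h1]; exact hvN
  obtain ⟨cseq, hcseqC, hcseqlim⟩ := mem_closure_iff_seq_limit.mp hvcl
  have hdec : ∀ n : ℕ, ∃ (x : V) (T : Finset I) (r : I → ℝ),
      x ∈ N ∧ 0 ≤ lam x ∧ (∀ i, 0 ≤ r i) ∧ (∀ i ∉ T, r i = 0) ∧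
      cseq n = x + ∑ i ∈ T, r i • γ i := by
    intro n
    have hmem := hcseqC n
    rw [hC] at hmem
    obtain ⟨x, hxN, hxlam, y, hy, hxy⟩ := hmem
    obtain ⟨T, r, ha', hb', hc'⟩ := monoid_rep γ hy
    exact ⟨x, T, r, hxN, hxlam, ha', hb', by rw [hxy, hc']⟩
  choose xs Ts rs hxsN hxslam hrs hrs0 hsum using hdec
  set ps : ℕ → V := fun n => ∑ i ∈ Gfin, rs n i • γ i with hpsdef
  set qs : ℕ → V := fun n => xs n + ∑ i ∈ Ts n \ Gfin, rs n i • γ i with hqsdef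
  have hsplit : ∀ n, cseq n = qs n + ps n := by
    intro n
    have key : ∑ i ∈ Ts n ∩ Gfin, rs n i • γ i = ∑ i ∈ Gfin, rs n i • γ i := by
      apply Finset.sum_subset Finset.inter_subset_right
      intro i hiG hiTG
      have hiT : i ∉ Ts n := fun h => hiTG (Finset.mem_inter.mpr ⟨h, hiG⟩)
      rw [hrs0 n i hiT, zero_smul]
    have h3 := Finset.sum_filter_add_sum_filter_not (Ts n) (· ∈ Gfin)
      (fun i => rs n i • γ i)
    rw [Finset.filter_mem_eq_inter, key] at h3
    have h4 : (Ts n).filter (fun i => i ∉ Gfin) = Ts n \ Gfin :=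
      (Finset.sdiff_eq_filter _ _).symm
    rw [h4] at h3
    rw [hsum n, hqsdef, hpsdef, ← h3]
    dsimp only
    abel
  have hqsN : ∀ n, qs n ∈ N := by
    intro n
    exact N.add_mem (hxsN n) (sum_mem_cone h0 _ _ fun i _ =>
      smul_mem_of_nonneg h0 (hγN i) (hrs n i))
  have hqlam : ∀ n, 0 ≤ lam (qs n) + ε * ω (qs n) := by
    intro n
    have elam : lam (qs n) = lam (xs n) + ∑ i ∈ Ts n \ Gfin, rs n i * lam (γ i) := by
      simp [hqsdef, map_add, map_sum, map_smul, smul_eq_mul]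
    have eom : ω (qs n) = ω (xs n) + ∑ i ∈ Ts n \ Gfin, rs n i * ω (γ i) := by
      simp [hqsdef, map_add, map_sum, map_smul, smul_eq_mul]
    have e2 : ∑ i ∈ Ts n \ Gfin, rs n i * (lam (γ i) + ε * ω (γ i))
        = (∑ i ∈ Ts n \ Gfin, rs n i * lam (γ i))
          + ε * ∑ i ∈ Ts n \ Gfin, rs n i * ω (γ i) := by
      rw [Finset.mul_sum, ← Finset.sum_add_distrib]
      exact Finset.sum_congr rfl fun i _ => by ring
    have e3 : 0 ≤ ∑ i ∈ Ts n \ Gfin, rs n i * (lam (γ i) + ε * ω (γ i)) := by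
      apply Finset.sum_nonneg
      intro i hi
      have hiG : i ∉ Gfin := (Finset.mem_sdiff.mp hi).2
      have hge : 0 ≤ lam (γ i) + ε * ω (γ i) :=
        not_lt.mp (fun hlt => hiG ((hGmem i).mpr hlt))
      exact mul_nonneg (hrs n i) hge
    have e4 : lam (qs n) + ε * ω (qs n)
        = (lam (xs n) + ε * ω (xs n))
          + ∑ i ∈ Ts n \ Gfin, rs n i * (lam (γ i) + ε * ω (γ i)) := by
      rw [elam, eom, e2]; ring
    have e5 : 0 ≤ ε * ω (xs n) := mul_nonneg hε.le (omega_nonneg ω hω (hxsN n))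
    have e6 := hxslam n
    linarith
  -- uniform bound on ω along the sequence
  have hωlim : Tendsto (fun n => ω (cseq n)) atTop (𝓝 (ω v)) :=
    (hωcont.tendsto v).comp hcseqlim
  obtain ⟨R₀, hR₀⟩ := hωlim.bddAbove_range
  set R : ℝ := max R₀ 1 with hRdef
  have hR1 : (0:ℝ) < R := lt_of_lt_of_le one_pos (le_max_right _ _)
  have hRb : ∀ n, ω (cseq n) ≤ R := fun n =>
    le_trans (hR₀ ⟨n, rfl⟩) (le_max_left _ _)
  have hωps : ∀ n, ω (ps n) = ∑ i ∈ Gfin, rs n i * ω (γ i) := by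
    intro n; simp [hpsdef, map_sum, map_smul, smul_eq_mul]
  have hωpsnn : ∀ n, 0 ≤ ω (ps n) := by
    intro n; rw [hωps n]
    exact Finset.sum_nonneg fun i _ => mul_nonneg (hrs n i) (hωγ i).le
  have hsplitω : ∀ n, ω (cseq n) = ω (qs n) + ω (ps n) := by
    intro n; rw [hsplit n, map_add]
  have hωq : ∀ n, ω (qs n) ≤ R := by
    intro n
    have := hsplitω n
    have := hωpsnn n
    have := hRb n
    linarith
  have hcoef : ∀ n, ∀ i ∈ Gfin, rs n i ≤ R / ω (γ i) := by
    intro n i hi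
    rw [le_div_iff₀ (hωγ i)]
    have hsingle : rs n i * ω (γ i) ≤ ∑ j ∈ Gfin, rs n j * ω (γ j) :=
      Finset.single_le_sum (fun j _ => mul_nonneg (hrs n j) (hωγ j).le) hi
    have h5 := hsplitω n
    have h6 := omega_nonneg ω hω (hqsN n)
    have h7 := hRb n
    rw [hωps n] at *
    linarith
  obtain ⟨Rr, hRr⟩ := Finite.exists_le (fun i : ↥Gfin => R / ω (γ i.val))
  set Rr' : ℝ := max Rr 0 with hRr'def
  obtain ⟨c₀, hc₀, hcb⟩ := cone_norm_bound N hN_closed ω hω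
  have hqnorm : ∀ n, ‖qs n‖ ≤ R / c₀ := by
    intro n
    rw [le_div_iff₀ hc₀, mul_comm]
    exact le_trans (hcb _ (hqsN n)) (hωq n)
  -- extraction in the product space
  set M : ℝ := max (R / c₀) Rr' with hMdef
  have hM0 : 0 ≤ M := le_trans (le_max_right _ _) (le_max_right _ _)
  have hseqmem : ∀ n, ((qs n, fun i : ↥Gfin => rs n i.val) : V × (↥Gfin → ℝ))
      ∈ Metric.closedBall (0 : V × (↥Gfin → ℝ)) M := by
    intro n
    rw [mem_closedBall_zero_iff, Prod.norm_def]
    apply max_le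
    · exact le_trans (hqnorm n) (le_max_left _ _)
    · rw [pi_norm_le_iff_of_nonneg hM0]
      intro i
      rw [Real.norm_eq_abs, abs_of_nonneg (hrs n i.val)]
      refine le_trans (hcoef n i.val i.2) (le_trans (hRr i) ?_)
      exact le_trans (le_max_left Rr 0) (le_max_right (R / c₀) Rr')
  obtain ⟨a, -, φ, hφ, hconv⟩ :=
    tendsto_subseq_of_bounded Metric.isBounded_closedBall hseqmem
  obtain ⟨x', svec⟩ := a
  have hxlim : Tendsto (fun k => qs (φ k)) atTop (𝓝 x') :=
    ((continuous_fst.tendsto (x', svec)).comp hconv : _)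
  have hrlim : ∀ i : ↥Gfin, Tendsto (fun k => rs (φ k) i.val) atTop (𝓝 (svec i)) := by
    intro i
    have hsnd : Tendsto (fun k => (fun j : ↥Gfin => rs (φ k) j.val)) atTop (𝓝 svec) :=
      ((continuous_snd.tendsto (x', svec)).comp hconv : _)
    exact ((continuous_apply i).tendsto svec).comp hsnd
  set p' : V := ∑ i : ↥Gfin, svec i • γ i.val with hp'def
  have hplim : Tendsto (fun k => ∑ i : ↥Gfin, rs (φ k) i.val • γ i.val) atTop (𝓝 p') :=
    tendsto_finset_sum _ (fun i _ => (hrlim i).smul_const (γ i.val))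
  have hps_eq : ∀ n, ps n = ∑ i : ↥Gfin, rs n i.val • γ i.val := by
    intro n
    rw [hpsdef]
    exact (Finset.sum_coe_sort Gfin (fun i => rs n i • γ i)).symm
  have hvq : v = x' + p' := by
    have h2' : Tendsto (fun k => cseq (φ k)) atTop (𝓝 (x' + p')) := by
      apply (hxlim.add hplim).congr
      intro k
      rw [← hps_eq (φ k), ← hsplit (φ k)]
    exact tendsto_nhds_unique (hcseqlim.comp hφ.tendsto_atTop) h2'
  have hx'N : x' ∈ N :=
    hN_closed.mem_of_tendsto hxlim (Eventually.of_forall fun k => hqsN (φ k))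
  have hsvec : ∀ i : ↥Gfin, 0 ≤ svec i := fun i =>
    ge_of_tendsto (hrlim i) (Eventually.of_forall fun k => hrs (φ k) i.val)
  have hx'good : 0 ≤ lam x' + ε * ω x' := by
    have h4' : Tendsto (fun k => lam (qs (φ k)) + ε * ω (qs (φ k))) atTop
        (𝓝 (lam x' + ε * ω x')) :=
      ((hlamcont.tendsto x').comp hxlim).add
        (((hωcont.tendsto x').comp hxlim).const_mul ε)
    exact ge_of_tendsto h4' (Eventually.of_forall fun k => hqlam (φ k))
  have hp'N : p' ∈ N :=
    sum_mem_cone h0 _ _ fun i _ => smul_mem_of_nonneg h0 (hγN i.val) (hsvec i)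
  obtain ⟨t, ht⟩ := hv.2 x' p' hx'N hp'N hvq.symm
  have hωx' : ω x' = t * ω v := by rw [ht, map_smul, smul_eq_mul]
  have ht0 : 0 ≤ t := by
    by_contra htneg
    push_neg at htneg
    have := mul_neg_of_neg_of_pos htneg hw
    have := omega_nonneg ω hω hx'N
    linarith
  have htz : t = 0 := by
    by_contra ht0'
    have htpos : 0 < t := lt_of_le_of_ne ht0 (Ne.symm ht0')
    have h5' : lam x' + ε * ω x' = t * (lam v + ε * ω v) := by
      rw [ht, map_smul, map_smul, smul_eq_mul, smul_eq_mul]; ring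
    have h6' : lam v + ε * ω v < 0 := by rw [hεω]; linarith
    nlinarith
  have hx'0 : x' = 0 := by rw [htz, zero_smul] at ht; exact ht
  have hvp : v = p' := by rw [hvq, hx'0, zero_add]
  have hex : ∃ i : ↥Gfin, svec i • γ i.val ≠ 0 := by
    by_contra hall
    push_neg at hall
    have hp0 : p' = 0 := Finset.sum_eq_zero fun i _ => hall i
    exact hv0 (by rw [hvp, hp0])
  obtain ⟨i, hi⟩ := hex
  have hterm : svec i • γ i.val + ∑ j ∈ Finset.univ.erase i, svec j • γ j.val = p' := by
    rw [hp'def]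
    exact Finset.add_sum_erase _ (fun j : ↥Gfin => svec j • γ j.val) (Finset.mem_univ i)
  have hqN : ∑ j ∈ Finset.univ.erase i, svec j • γ j.val ∈ N :=
    sum_mem_cone h0 _ _ fun j _ => smul_mem_of_nonneg h0 (hγN j.val) (hsvec j)
  obtain ⟨t₂, ht₂⟩ := hv.2 _ _ (smul_mem_of_nonneg h0 (hγN i.val) (hsvec i)) hqN
    (by rw [hterm, ← hvp])
  have hsi : 0 < svec i := by
    rcases (hsvec i).eq_or_lt with h | h
    · exact absurd (by rw [← h, zero_smul]) hi
    · exact h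
  have hων : 0 < ω (svec i • γ i.val) := by
    rw [map_smul, smul_eq_mul]
    exact mul_pos hsi (hωγ i.val)
  have ht₂pos : 0 < t₂ := by
    have h7' : ω (svec i • γ i.val) = t₂ * ω v := by rw [ht₂, map_smul, smul_eq_mul]
    nlinarith
  refine ⟨i.val, t₂⁻¹ * svec i, by positivity, ?_⟩
  have h8' : v = t₂⁻¹ • (svec i • γ i.val) := by
    rw [ht₂, inv_smul_smul₀ (ne_of_gt ht₂pos)]
  rw [h8', smul_smul]


theorem multiset_sum_mem_cone {N : ConvexCone ℝ V} (h0 : (0 : V) ∈ N) (S : Multiset V)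
    (h : ∀ v ∈ S, v ∈ N) : S.sum ∈ N := by
  revert h
  refine Multiset.induction_on S (fun _ => by simpa using h0) ?_
  intro a s ih h
  rw [Multiset.sum_cons]
  exact N.add_mem (h a (Multiset.mem_cons_self a s))
    (ih fun v hv => h v (Multiset.mem_cons_of_mem hv))

end aux

/-- Abstract form of Lemma `lemmaclosure`: under the stated hypotheses the cone
`C = {z ∈ N | λ(z) ≥ 0} + ∑ᵢ ℝ₊ γᵢ` is already closed, i.e. equals `N`. -/
theorem stmt_9 {V : Type*} [NormedAddCommGroup V] [NormedSpace ℝ V]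
    [FiniteDimensional ℝ V]
    (N : ConvexCone ℝ V) (hN_closed : IsClosed (N : Set V))
    (hN_lines : ∀ v : V, v ∈ N → -v ∈ N → v = 0)
    (lam ω : V →ₗ[ℝ] ℝ)
    (hω : ∀ z ∈ N, z ≠ 0 → 0 < ω z)
    {I : Type*} [Countable I] (γ : I → V) (hγN : ∀ i, γ i ∈ N)
    (d : ℝ) (hd : 0 < d) (hγ : ∀ i, 0 < -lam (γ i) ∧ -lam (γ i) ≤ d)
    (C : Set V)
    (hC : C = { z : V | ∃ x ∈ (N : Set V), 0 ≤ lam x ∧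
        ∃ y ∈ AddSubmonoid.closure (⋃ i : I, { t : V | ∃ r : ℝ, 0 ≤ r ∧ t = r • γ i }),
          z = x + y })
    (h1 : (N : Set V) = closure C)
    (h2 : ∀ ε : ℝ, 0 < ε → { i : I | lam (γ i) + ε * ω (γ i) < 0 }.Finite) :
    (N : Set V) = C := by
  classical
  ext z
  constructor
  · intro hzN
    have h0 : (0 : V) ∈ N := zero_mem_of_closed hN_closed hzN
    obtain ⟨S, hSext, hSsum⟩ :=
      cone_extremal_decomp (Module.finrank ℝ V) V le_rfl N hN_closed hN_lines ω hω z hzN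
    rw [hC]
    set S₁ := S.filter (fun v => 0 ≤ lam v) with hS₁
    set S₂ := S.filter (fun v => ¬ 0 ≤ lam v) with hS₂
    refine ⟨S₁.sum, ?_, ?_, S₂.sum, ?_, ?_⟩
    · exact multiset_sum_mem_cone h0 S₁ fun v hv =>
        (hSext v (Multiset.mem_of_mem_filter hv)).1
    · have : lam S₁.sum = (S₁.map lam).sum := map_multiset_sum lam S₁
      rw [this]
      apply Multiset.sum_nonneg
      intro x hx
      obtain ⟨v, hv, rfl⟩ := Multiset.mem_map.mp hx
      exact (Multiset.mem_filter.mp hv).2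
    · apply multiset_sum_mem
      intro v hv
      have hvS := Multiset.mem_of_mem_filter hv
      have hvneg : lam v < 0 := not_le.mp (Multiset.mem_filter.mp hv).2
      obtain ⟨i, r, hr, hvr⟩ := extremal_neg_gamma N hN_closed lam ω hω γ hγN
        (fun i => (hγ i).1) C hC h1 h2 h0 (hSext v hvS) hvneg
      apply AddSubmonoid.subset_closure
      rw [Set.mem_iUnion]
      exact ⟨i, r, hr, hvr⟩
    · rw [hSsum, ← Multiset.filter_add_not (fun v => 0 ≤ lam v) S, Multiset.sum_add]
  · intro hzC
    rw [h1]
    exact subset_closure hzC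
end

section
/- Let V be a finite-dimensional real vector space, N ⊆ V a closed convex cone containing no lines, and let N = V' + ℝ₊·γ where V' ⊆ N is a closed convex subcone and ℝ₊·γ (with γ ∈ N ∖ V', γ ≠ 0) is an extremal ray of N not contained in V'. Then there exists a linear functional α : V → ℝ such that α(γ) = 0, α(z) > 0 for all z ∈ V' ∖ {0}, and consequently { z ∈ N | α(z) = 0 } = ℝ₊·γ. -/
open Set Pointwise

lemma aux_isCompact_convexHull {V : Type*} [NormedAddCommGroup V] [NormedSpace ℝ V]
    [FiniteDimensional ℝ V] {s : Set V} (hs : IsCompact s) :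
    IsCompact (convexHull ℝ s) := by
  classical
  rcases s.eq_empty_or_nonempty with rfl | ⟨s₀, hs₀⟩
  · simp
  set n := Module.finrank ℝ V with hn
  set T : Set ((Fin (n+1) → ℝ) × (Fin (n+1) → V)) :=
    (stdSimplex ℝ (Fin (n+1))) ×ˢ (Set.univ.pi fun _ : Fin (n+1) => s) with hT
  have hTc : IsCompact T := (isCompact_stdSimplex (𝕜 := ℝ) (ι := Fin (n+1))).prod (isCompact_univ_pi fun _ => hs)
  set g : ((Fin (n+1) → ℝ) × (Fin (n+1) → V)) → V := fun p => ∑ i, p.1 i • p.2 i with hgdef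
  have hg : Continuous g := by
    apply continuous_finset_sum
    intro i _
    exact ((continuous_apply i).comp continuous_fst).smul
      ((continuous_apply i).comp continuous_snd)
  have himg : g '' T = convexHull ℝ s := by
    apply Subset.antisymm
    · rintro _ ⟨⟨w, z⟩, ⟨⟨hw0, hw1⟩, hz⟩, rfl⟩
      exact mem_convexHull_of_exists_fintype w z hw0 hw1
        (fun i => hz i (mem_univ i)) rfl
    · intro x hx
      rw [convexHull_eq_union] at hx
      simp only [mem_iUnion, exists_prop] at hx
      obtain ⟨t, hts, hti, hxt⟩ := hx
      have hcard : t.card ≤ n + 1 := by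
        have h1 := hti.card_le_finrank_succ
        have h2 : Module.finrank ℝ (vectorSpan ℝ (Set.range ((↑) : t → V))) ≤ n :=
          Submodule.finrank_le _
        rw [Fintype.card_coe] at h1
        omega
      rw [Finset.convexHull_eq] at hxt
      obtain ⟨w, hw0, hw1, hwx⟩ := hxt
      set e : Fin t.card ≃ {x // x ∈ t} := t.equivFin.symm with he
      set f : ℕ → ℝ := fun k => if h : k < t.card then w (e ⟨k, h⟩) else 0 with hf
      set p : ℕ → V := fun k => if h : k < t.card then ((e ⟨k, h⟩ : V)) else s₀ with hp
      refine ⟨⟨fun i => f i, fun i => p i⟩, ⟨⟨?_, ?_⟩, ?_⟩, ?_⟩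
      · intro i
        simp only [hf]
        split_ifs with h
        · exact hw0 _ (e ⟨i, h⟩).2
        · exact le_refl _
      · show ∑ i : Fin (n+1), f (i : ℕ) = 1
        calc ∑ i : Fin (n+1), f (i : ℕ) = ∑ k ∈ Finset.range (n+1), f k :=
              Fin.sum_univ_eq_sum_range f (n+1)
          _ = ∑ k ∈ Finset.range t.card, f k := by
              refine (Finset.sum_subset (Finset.range_subset_range.mpr hcard) ?_).symm
              intro k _ hk
              simp only [Finset.mem_range, not_lt] at hk
              simp [hf, not_lt.mpr hk]
          _ = ∑ j : Fin t.card, f j := (Fin.sum_univ_eq_sum_range f t.card).symm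
          _ = ∑ j : Fin t.card, w (e j) := by
              refine Finset.sum_congr rfl fun j _ => ?_
              simp [hf, j.isLt]
          _ = ∑ y : {x // x ∈ t}, w y := Equiv.sum_comp e (fun y : {x // x ∈ t} => w (y:V))
          _ = ∑ y ∈ t, w y := Finset.sum_attach t w
          _ = 1 := hw1
      · intro i _
        simp only [hp]
        split_ifs with h
        · exact hts (e ⟨i, h⟩).2
        · exact hs₀
      · show ∑ i : Fin (n+1), f (i : ℕ) • p (i : ℕ) = x
        set F : ℕ → V := fun k => f k • p k with hF
        calc ∑ i : Fin (n+1), f (i:ℕ) • p (i:ℕ) = ∑ k ∈ Finset.range (n+1), F k :=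
              Fin.sum_univ_eq_sum_range F (n+1)
          _ = ∑ k ∈ Finset.range t.card, F k := by
              refine (Finset.sum_subset (Finset.range_subset_range.mpr hcard) ?_).symm
              intro k _ hk
              simp only [Finset.mem_range, not_lt] at hk
              simp [hF, hf, not_lt.mpr hk]
          _ = ∑ j : Fin t.card, F (j:ℕ) := (Fin.sum_univ_eq_sum_range F t.card).symm
          _ = ∑ j : Fin t.card, w (e j) • (e j : V) := by
              refine Finset.sum_congr rfl fun j _ => ?_
              simp [hF, hf, hp, j.isLt]
          _ = ∑ y : {x // x ∈ t}, w (y:V) • (y : V) := Equiv.sum_comp e (fun y : {x // x ∈ t} => w (y:V) • (y:V))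
          _ = ∑ y ∈ t, w y • y := Finset.sum_attach t (fun y => w y • y)
          _ = t.centerMass w id := (Finset.centerMass_eq_of_sum_1 t id hw1).symm
          _ = x := hwx
  exact himg ▸ hTc.image hg

/-- Proposition `propositionperp` in abstract form: existence of a supporting
functional `α` for an extremal ray `ℝ₊ γ` of `N = V' + ℝ₊ γ`. -/
theorem stmt_10 {V : Type*} [NormedAddCommGroup V] [NormedSpace ℝ V]
    [FiniteDimensional ℝ V]
    (N V' : ConvexCone ℝ V)
    (hN_closed : IsClosed (N : Set V)) (hV'_closed : IsClosed (V' : Set V))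
    (hN_lines : ∀ v : V, v ∈ N → -v ∈ N → v = 0)
    (hsub : (V' : Set V) ⊆ (N : Set V))
    (γ : V) (hγN : γ ∈ N) (hγV' : γ ∉ V') (hγ0 : γ ≠ 0)
    (hextr : ∀ u ∈ N, ∀ v ∈ N, (∃ r : ℝ, 0 ≤ r ∧ u + v = r • γ) →
      (∃ r : ℝ, 0 ≤ r ∧ u = r • γ) ∧ (∃ r : ℝ, 0 ≤ r ∧ v = r • γ))
    (hdecomp : (N : Set V) = { z : V | ∃ x ∈ (V' : Set V), ∃ r : ℝ, 0 ≤ r ∧ z = x + r • γ }) :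
    ∃ α : V →ₗ[ℝ] ℝ, α γ = 0 ∧ (∀ z ∈ V', z ≠ 0 → 0 < α z) ∧
      { z ∈ (N : Set V) | α z = 0 } = { z : V | ∃ r : ℝ, 0 ≤ r ∧ z = r • γ } := by
  classical
  have hpt : ∀ z ∈ V', -z ∈ V' → z = (0 : V) := fun z hz hz' =>
    hN_lines z (hsub hz) (hsub hz')
  -- no nonzero multiple of γ lies in V'
  have hray : ∀ t : ℝ, t • γ ∈ V' → t = 0 := by
    intro t ht
    rcases lt_trichotomy t 0 with h | h | h
    · exfalso
      have h1 : t • γ ∈ N := hsub ht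
      have h2 : -(t • γ) ∈ N := by
        rw [← neg_smul]
        exact N.smul_mem (by linarith) hγN
      have h3 := hN_lines _ h1 h2
      rcases smul_eq_zero.mp h3 with h' | h'
      · exact absurd h' (ne_of_lt h)
      · exact hγ0 h'
    · exact h
    · exfalso
      apply hγV'
      have h4 := V'.smul_mem (inv_pos.mpr h) ht
      rwa [smul_smul, inv_mul_cancel₀ (ne_of_gt h), one_smul] at h4
  -- 0 ∈ V'
  have h0V' : (0 : V) ∈ V' := by
    have hγ' : γ ∈ { z : V | ∃ x ∈ (V' : Set V), ∃ r : ℝ, 0 ≤ r ∧ z = x + r • γ } :=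
      hdecomp ▸ (hγN : γ ∈ (N : Set V))
    obtain ⟨x, hx, r, hr, hxe⟩ := hγ'
    have hxg : x = (1 - r) • γ := by
      rw [sub_smul, one_smul]
      exact eq_sub_of_add_eq hxe.symm
    have h1r : (1 - r : ℝ) = 0 := hray _ (by rwa [hxg] at hx)
    have : x = 0 := by rw [hxg, h1r, zero_smul]
    rwa [this] at hx
  have hNmem : ∀ r : ℝ, 0 ≤ r → r • γ ∈ (N : Set V) := by
    intro r hr
    rcases hr.eq_or_lt with h | h
    · rw [← h, zero_smul]
      exact hsub h0V'
    · exact N.smul_mem h hγN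
  by_cases hVz : ∀ z ∈ V', z = (0 : V)
  · -- degenerate case : V' = {0}, take α = 0
    refine ⟨0, rfl, ?_, ?_⟩
    · intro z hz hz0
      exact absurd (hVz z hz) hz0
    · ext z
      simp only [Set.mem_setOf_eq, Set.mem_sep_iff, LinearMap.zero_apply, eq_self_iff_true,
        and_true]
      constructor
      · intro hzN
        have hz' : z ∈ { z : V | ∃ x ∈ (V' : Set V), ∃ r : ℝ, 0 ≤ r ∧ z = x + r • γ } :=
          hdecomp ▸ hzN
        obtain ⟨x, hx, r, hr, rfl⟩ := hz'
        exact ⟨r, hr, by rw [hVz x hx, zero_add]⟩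
      · rintro ⟨r, hr, rfl⟩
        exact hNmem r hr
  · push_neg at hVz
    obtain ⟨z₀, hz₀V, hz₀⟩ := hVz
    -- the compact convex base
    set S : Set V := (V' : Set V) ∩ Metric.sphere (0 : V) 1 with hS
    have hScpt : IsCompact S := (isCompact_sphere 0 1).inter_left hV'_closed
    set C : Set V := convexHull ℝ S with hC
    have hCcpt : IsCompact C := aux_isCompact_convexHull hScpt
    have hCconv : Convex ℝ C := convex_convexHull ℝ S
    -- V' \ {0} is convex
    have hV'0conv : Convex ℝ ((V' : Set V) \ {0}) := by
      intro x hx y hy a b ha hb hab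
      rcases ha.eq_or_lt with ha0 | ha0
      · rw [← ha0, zero_add] at hab
        rw [← ha0, zero_smul, zero_add, hab, one_smul]
        exact hy
      rcases hb.eq_or_lt with hb0 | hb0
      · rw [← hb0, add_zero] at hab
        rw [← hb0, zero_smul, add_zero, hab, one_smul]
        exact hx
      have hmem : a • x + b • y ∈ V' :=
        V'.add_mem (V'.smul_mem ha0 hx.1) (V'.smul_mem hb0 hy.1)
      refine ⟨hmem, ?_⟩
      intro hzero
      simp only [Set.mem_singleton_iff] at hzero
      have hax : a • x ∈ V' := V'.smul_mem ha0 hx.1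
      have hby : -(a • x) ∈ V' := by
        rw [neg_eq_of_add_eq_zero_right hzero]
        exact V'.smul_mem hb0 hy.1
      have := hpt _ hax hby
      rcases smul_eq_zero.mp this with h' | h'
      · exact absurd h' (ne_of_gt ha0)
      · exact hx.2 (Set.mem_singleton_iff.mpr h')
    have hCsub : C ⊆ (V' : Set V) \ {0} := by
      apply convexHull_min _ hV'0conv
      rintro z ⟨hz1, hz2⟩
      refine ⟨hz1, ?_⟩
      intro h0
      simp only [Set.mem_singleton_iff] at h0
      rw [h0] at hz2
      simp at hz2
    -- the line through γ
    set L : Set V := ((Submodule.span ℝ {γ} : Submodule ℝ V) : Set V) with hL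
    have hLclosed : IsClosed L := (Submodule.span ℝ {γ}).closed_of_finiteDimensional
    have hLconv : Convex ℝ L := (Submodule.span ℝ {γ}).convex
    have hDclosed : IsClosed (C + L) := hLclosed.add_left_of_isCompact hCcpt
    have hDconv : Convex ℝ (C + L) := hCconv.add hLconv
    have h0D : (0 : V) ∉ C + L := by
      rintro ⟨c, hc, l, hl, hcl⟩
      obtain ⟨a, rfl⟩ := Submodule.mem_span_singleton.mp hl
      have hcV : c ∈ (V' : Set V) \ {0} := hCsub hc
      have hceq : c = (-a) • γ := by
        rw [neg_smul]
        exact (neg_eq_of_add_eq_zero_left hcl).symm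
      have ha0 : (-a : ℝ) = 0 := hray _ (by rw [← hceq]; exact hcV.1)
      apply hcV.2
      rw [hceq, ha0, zero_smul]
      rfl
    obtain ⟨f, u, hfu, hf⟩ := geometric_hahn_banach_point_closed hDconv hDclosed h0D
    have hu0 : (0 : ℝ) < u := by
      have := hfu
      rwa [map_zero] at this
    -- membership helper
    have hmemD : ∀ c ∈ C, ∀ t : ℝ, c + t • γ ∈ C + L := by
      intro c hc t
      exact Set.add_mem_add hc (Submodule.mem_span_singleton.mpr ⟨t, rfl⟩)
    -- some element of C
    have hc₀ : ‖z₀‖⁻¹ • z₀ ∈ C := by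
      apply subset_convexHull
      constructor
      · exact V'.smul_mem (inv_pos.mpr (norm_pos_iff.mpr hz₀)) hz₀V
      · simp only [mem_sphere_iff_norm, sub_zero, norm_smul, norm_inv, norm_norm]
        rw [inv_mul_cancel₀ (norm_ne_zero_iff.mpr hz₀)]
    have hfγ : f γ = 0 := by
      by_contra hne
      have key := hf _ (hmemD _ hc₀ ((u - f (‖z₀‖⁻¹ • z₀) - 1) / f γ))
      simp only [map_add, map_smul, smul_eq_mul] at key
      rw [div_mul_cancel₀ _ hne] at key
      linarith
    have hfpos : ∀ z ∈ V', z ≠ 0 → 0 < f z := by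
      intro z hz hz0
      have hcz : ‖z‖⁻¹ • z ∈ C := by
        apply subset_convexHull
        constructor
        · exact V'.smul_mem (inv_pos.mpr (norm_pos_iff.mpr hz0)) hz
        · simp only [mem_sphere_iff_norm, sub_zero, norm_smul, norm_inv, norm_norm]
          rw [inv_mul_cancel₀ (norm_ne_zero_iff.mpr hz0)]
      have key := hf _ (hmemD _ hcz 0)
      rw [zero_smul, add_zero] at key
      simp only [map_smul, smul_eq_mul] at key
      have h1 : (0 : ℝ) < ‖z‖⁻¹ * f z := lt_trans hu0 key
      have h2 := mul_pos (norm_pos_iff.mpr hz0) h1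
      rwa [← mul_assoc, mul_inv_cancel₀ (norm_ne_zero_iff.mpr hz0), one_mul] at h2
    refine ⟨f.toLinearMap, hfγ, ?_, ?_⟩
    · intro z hz hz0
      exact hfpos z hz hz0
    · ext z
      simp only [Set.mem_setOf_eq, Set.mem_sep_iff, ContinuousLinearMap.coe_coe]
      constructor
      · rintro ⟨hzN, hz0⟩
        have hz' : z ∈ { z : V | ∃ x ∈ (V' : Set V), ∃ r : ℝ, 0 ≤ r ∧ z = x + r • γ } :=
          hdecomp ▸ hzN
        obtain ⟨x, hx, r, hr, rfl⟩ := hz'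
        have hfx : f x = 0 := by
          rw [map_add, map_smul, smul_eq_mul, hfγ, mul_zero, add_zero] at hz0
          exact hz0
        have hx0 : x = 0 := by
          by_contra hxne
          exact absurd hfx (ne_of_gt (hfpos x hx hxne))
        exact ⟨r, hr, by rw [hx0, zero_add]⟩
      · rintro ⟨r, hr, rfl⟩
        refine ⟨hNmem r hr, ?_⟩
        rw [map_smul, smul_eq_mul, hfγ, mul_zero]
end
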